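/- Let $1<p_1,p_2<\infty$ and define $1/p = 1/p_1 + 1/p_2$. Then for every $N\ge 1$, every $f\in\ell^{p_1}(\mathbb{Z})$, and every $g\in\ell^{p_2}(\mathbb{Z})$, the bilinear average $A_N(f,g)(x) = \frac{1}{N}\sum_{n=1}^N f(x-\lfloor\sqrt{n}\rfloor)g(x-n)$ satisfies $\|A_N(f,g)\|_{\ell^p(\mathbb{Z})} \le C_{p_1,p_2}\|f\|_{\ell^{p_1}(\mathbb{Z})}\|g\|_{\ell^{p_2}(\mathbb{Z})}$ with constant independent of $N$. -/

import Mathlib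

open MeasureTheory
open scoped ENNReal NNReal

namespace Stmt11

lemma tsum_hoelder2 (w : ℝ) (hw0 : 0 ≤ w) (hw1 : w ≤ 1) (u v : ℤ → ℝ≥0∞) :
    ∑' i, u i ^ w * v i ^ (1 - w) ≤ (∑' i, u i) ^ w * (∑' i, v i) ^ (1 - w) := by
  rcases eq_or_lt_of_le hw0 with h0 | h0
  · simp [← h0]
  rcases eq_or_lt_of_le hw1 with h1 | h1
  · simp [h1]
  have hpq : (1/w).HolderConjugate (1/(1-w)) := by
    rw [Real.holderConjugate_iff]; constructor
    · rw [lt_div_iff₀ h0]; linarith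
    · rw [one_div, one_div, inv_inv, inv_inv]; ring
  have H := ENNReal.lintegral_mul_le_Lp_mul_Lq (Measure.count (α := ℤ)) hpq
    (f := fun i => u i ^ w) (g := fun i => v i ^ (1 - w))
    measurable_from_top.aemeasurable measurable_from_top.aemeasurable
  have hw : w ≠ 0 := ne_of_gt h0
  have hw' : (1:ℝ) - w ≠ 0 := by linarith
  simp only [lintegral_count, Pi.mul_apply] at H
  calc ∑' i, u i ^ w * v i ^ (1 - w) ≤ _ := H
  _ = (∑' i, u i) ^ w * (∑' i, v i) ^ (1 - w) := by
      simp only [one_div, inv_inv]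
      congr 1
      · congr 1
        apply tsum_congr; intro i
        rw [← ENNReal.rpow_mul, mul_inv_cancel₀ hw, ENNReal.rpow_one]
      · congr 1
        apply tsum_congr; intro i
        rw [← ENNReal.rpow_mul, mul_inv_cancel₀ hw', ENNReal.rpow_one]

end Stmt11

namespace Stmt11

lemma sum_hoelder2 (s : Finset ℕ) (w : ℝ) (hw0 : 0 ≤ w) (hw1 : w ≤ 1) (u v : ℕ → ℝ≥0∞) :
    ∑ i ∈ s, u i ^ w * v i ^ (1 - w) ≤ (∑ i ∈ s, u i) ^ w * (∑ i ∈ s, v i) ^ (1 - w) := by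
  rcases eq_or_lt_of_le hw0 with h0 | h0
  · simp [← h0]
  rcases eq_or_lt_of_le hw1 with h1 | h1
  · simp [h1]
  have hpq : (1/w).HolderConjugate (1/(1-w)) := by
    rw [Real.holderConjugate_iff]; constructor
    · rw [lt_div_iff₀ h0]; linarith
    · rw [one_div, one_div, inv_inv, inv_inv]; ring
  have hw : w ≠ 0 := ne_of_gt h0
  have hw' : (1:ℝ) - w ≠ 0 := by linarith
  have H := ENNReal.inner_le_Lp_mul_Lq (s := s) (fun i => u i ^ w) (fun i => v i ^ (1 - w)) hpq
  calc ∑ i ∈ s, u i ^ w * v i ^ (1 - w) ≤ _ := H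
  _ = (∑ i ∈ s, u i) ^ w * (∑ i ∈ s, v i) ^ (1 - w) := by
      simp only [one_div, inv_inv]
      congr 1
      · congr 1
        apply Finset.sum_congr rfl; intro i _
        rw [← ENNReal.rpow_mul, mul_inv_cancel₀ hw, ENNReal.rpow_one]
      · congr 1
        apply Finset.sum_congr rfl; intro i _
        rw [← ENNReal.rpow_mul, mul_inv_cancel₀ hw', ENNReal.rpow_one]

lemma sum_hoelder3 (s : Finset ℕ) (w1 w2 w3 : ℝ) (h1 : 0 ≤ w1) (h2 : 0 ≤ w2) (h3 : 0 ≤ w3)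
    (hs : w1 + w2 + w3 = 1) (u v z : ℕ → ℝ≥0∞) :
    ∑ i ∈ s, u i ^ w1 * v i ^ w2 * z i ^ w3 ≤
      (∑ i ∈ s, u i) ^ w1 * (∑ i ∈ s, v i) ^ w2 * (∑ i ∈ s, z i) ^ w3 := by
  rcases eq_or_lt_of_le (show w1 ≤ 1 by linarith) with hw1 | hw1
  · have hw2 : w2 = 0 := by linarith
    have hw3 : w3 = 0 := by linarith
    simp [hw1, hw2, hw3]
  have hpos : (0:ℝ) < 1 - w1 := by linarith
  have hne : (1:ℝ) - w1 ≠ 0 := ne_of_gt hpos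
  set V : ℕ → ℝ≥0∞ := fun i => v i ^ (w2 / (1 - w1)) * z i ^ (w3 / (1 - w1)) with hV
  have key : ∀ i, u i ^ w1 * v i ^ w2 * z i ^ w3 = u i ^ w1 * V i ^ (1 - w1) := by
    intro i
    rw [hV]
    rw [ENNReal.mul_rpow_of_nonneg _ _ (le_of_lt hpos), ← ENNReal.rpow_mul, ← ENNReal.rpow_mul,
      div_mul_cancel₀ _ hne, div_mul_cancel₀ _ hne, mul_assoc]
  calc ∑ i ∈ s, u i ^ w1 * v i ^ w2 * z i ^ w3
      = ∑ i ∈ s, u i ^ w1 * V i ^ (1 - w1) := by apply Finset.sum_congr rfl; intro i _; rw [key]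
    _ ≤ (∑ i ∈ s, u i) ^ w1 * (∑ i ∈ s, V i) ^ (1 - w1) :=
        sum_hoelder2 s w1 h1 (by linarith) u V
    _ ≤ (∑ i ∈ s, u i) ^ w1 * (((∑ i ∈ s, v i) ^ (w2 / (1-w1)) * (∑ i ∈ s, z i) ^ (w3 / (1-w1))) ^ (1 - w1)) := by
        have hsum : (1:ℝ) - w2/(1-w1) = w3/(1-w1) := by field_simp; linarith
        have HV : ∑ i ∈ s, V i ≤ (∑ i ∈ s, v i) ^ (w2/(1-w1)) * (∑ i ∈ s, z i) ^ (w3/(1-w1)) := by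
          have H2 := sum_hoelder2 s (w2/(1-w1)) (by positivity)
            (by rw [div_le_one hpos]; linarith) v z
          rw [hsum] at H2
          exact H2
        exact mul_le_mul_right (ENNReal.rpow_le_rpow HV (le_of_lt hpos)) _
    _ = (∑ i ∈ s, u i) ^ w1 * (∑ i ∈ s, v i) ^ w2 * (∑ i ∈ s, z i) ^ w3 := by
        rw [ENNReal.mul_rpow_of_nonneg _ _ (le_of_lt hpos), ← ENNReal.rpow_mul, ← ENNReal.rpow_mul,
          div_mul_cancel₀ _ hne, div_mul_cancel₀ _ hne, mul_assoc]

end Stmt11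

namespace Stmt11

lemma tsum_hoelder3 (w1 w2 w3 : ℝ) (h1 : 0 ≤ w1) (h2 : 0 ≤ w2) (h3 : 0 ≤ w3)
    (hs : w1 + w2 + w3 = 1) (u v z : ℤ → ℝ≥0∞) :
    ∑' i, u i ^ w1 * v i ^ w2 * z i ^ w3 ≤
      (∑' i, u i) ^ w1 * (∑' i, v i) ^ w2 * (∑' i, z i) ^ w3 := by
  rcases eq_or_lt_of_le (show w1 ≤ 1 by linarith) with hw1 | hw1
  · have hw2 : w2 = 0 := by linarith
    have hw3 : w3 = 0 := by linarith
    simp [hw1, hw2, hw3]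
  have hpos : (0:ℝ) < 1 - w1 := by linarith
  have hne : (1:ℝ) - w1 ≠ 0 := ne_of_gt hpos
  set V : ℤ → ℝ≥0∞ := fun i => v i ^ (w2 / (1 - w1)) * z i ^ (w3 / (1 - w1)) with hV
  have key : ∀ i, u i ^ w1 * v i ^ w2 * z i ^ w3 = u i ^ w1 * V i ^ (1 - w1) := by
    intro i
    rw [hV]
    rw [ENNReal.mul_rpow_of_nonneg _ _ (le_of_lt hpos), ← ENNReal.rpow_mul, ← ENNReal.rpow_mul,
      div_mul_cancel₀ _ hne, div_mul_cancel₀ _ hne, mul_assoc]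
  calc ∑' i, u i ^ w1 * v i ^ w2 * z i ^ w3
      = ∑' i, u i ^ w1 * V i ^ (1 - w1) := by apply tsum_congr; intro i; rw [key]
    _ ≤ (∑' i, u i) ^ w1 * (∑' i, V i) ^ (1 - w1) :=
        tsum_hoelder2 w1 h1 (by linarith) u V
    _ ≤ (∑' i, u i) ^ w1 * (((∑' i, v i) ^ (w2 / (1-w1)) * (∑' i, z i) ^ (w3 / (1-w1))) ^ (1 - w1)) := by
        have hsum : (1:ℝ) - w2/(1-w1) = w3/(1-w1) := by field_simp; linarith
        have HV : ∑' i, V i ≤ (∑' i, v i) ^ (w2/(1-w1)) * (∑' i, z i) ^ (w3/(1-w1)) := by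
          have H2 := tsum_hoelder2 (w2/(1-w1)) (by positivity)
            (by rw [div_le_one hpos]; linarith) v z
          rw [hsum] at H2
          exact H2
        exact mul_le_mul_right (ENNReal.rpow_le_rpow HV (le_of_lt hpos)) _
    _ = (∑' i, u i) ^ w1 * (∑' i, v i) ^ w2 * (∑' i, z i) ^ w3 := by
        rw [ENNReal.mul_rpow_of_nonneg _ _ (le_of_lt hpos), ← ENNReal.rpow_mul, ← ENNReal.rpow_mul,
          div_mul_cancel₀ _ hne, div_mul_cancel₀ _ hne, mul_assoc]

lemma tsum_hoelder4 (w1 w2 w3 w4 : ℝ) (h1 : 0 ≤ w1) (h2 : 0 ≤ w2) (h3 : 0 ≤ w3) (h4 : 0 ≤ w4)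
    (hs : w1 + w2 + w3 + w4 = 1) (u v z t : ℤ → ℝ≥0∞) :
    ∑' i, u i ^ w1 * v i ^ w2 * z i ^ w3 * t i ^ w4 ≤
      (∑' i, u i) ^ w1 * (∑' i, v i) ^ w2 * (∑' i, z i) ^ w3 * (∑' i, t i) ^ w4 := by
  rcases eq_or_lt_of_le (show w1 ≤ 1 by linarith) with hw1 | hw1
  · have hw2 : w2 = 0 := by linarith
    have hw3 : w3 = 0 := by linarith
    have hw4 : w4 = 0 := by linarith
    simp [hw1, hw2, hw3, hw4]
  have hpos : (0:ℝ) < 1 - w1 := by linarith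
  have hne : (1:ℝ) - w1 ≠ 0 := ne_of_gt hpos
  set V : ℤ → ℝ≥0∞ := fun i =>
    v i ^ (w2 / (1 - w1)) * z i ^ (w3 / (1 - w1)) * t i ^ (w4 / (1 - w1)) with hV
  have key : ∀ i, u i ^ w1 * v i ^ w2 * z i ^ w3 * t i ^ w4 = u i ^ w1 * V i ^ (1 - w1) := by
    intro i
    rw [hV]
    rw [ENNReal.mul_rpow_of_nonneg _ _ (le_of_lt hpos),
      ENNReal.mul_rpow_of_nonneg _ _ (le_of_lt hpos), ← ENNReal.rpow_mul, ← ENNReal.rpow_mul,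
      ← ENNReal.rpow_mul, div_mul_cancel₀ _ hne, div_mul_cancel₀ _ hne, div_mul_cancel₀ _ hne]
    ring
  calc ∑' i, u i ^ w1 * v i ^ w2 * z i ^ w3 * t i ^ w4
      = ∑' i, u i ^ w1 * V i ^ (1 - w1) := by apply tsum_congr; intro i; rw [key]
    _ ≤ (∑' i, u i) ^ w1 * (∑' i, V i) ^ (1 - w1) :=
        tsum_hoelder2 w1 h1 (by linarith) u V
    _ ≤ (∑' i, u i) ^ w1 * (((∑' i, v i) ^ (w2 / (1-w1)) * (∑' i, z i) ^ (w3 / (1-w1))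
          * (∑' i, t i) ^ (w4 / (1-w1))) ^ (1 - w1)) := by
        have HV : ∑' i, V i ≤ (∑' i, v i) ^ (w2/(1-w1)) * (∑' i, z i) ^ (w3/(1-w1))
            * (∑' i, t i) ^ (w4/(1-w1)) :=
          tsum_hoelder3 (w2/(1-w1)) (w3/(1-w1)) (w4/(1-w1)) (by positivity) (by positivity)
            (by positivity) (by field_simp; linarith) v z t
        exact mul_le_mul_right (ENNReal.rpow_le_rpow HV (le_of_lt hpos)) _
    _ = (∑' i, u i) ^ w1 * (∑' i, v i) ^ w2 * (∑' i, z i) ^ w3 * (∑' i, t i) ^ w4 := by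
        rw [ENNReal.mul_rpow_of_nonneg _ _ (le_of_lt hpos),
          ENNReal.mul_rpow_of_nonneg _ _ (le_of_lt hpos), ← ENNReal.rpow_mul, ← ENNReal.rpow_mul,
          ← ENNReal.rpow_mul, div_mul_cancel₀ _ hne, div_mul_cancel₀ _ hne, div_mul_cancel₀ _ hne]
        ring

end Stmt11

namespace Stmt11

/-- `n - sqrt n` is injective on squares. -/
lemma phi_inj_sq {n n' : ℕ} (hn : 1 ≤ n) (hn' : 1 ≤ n')
    (hs : Nat.sqrt n * Nat.sqrt n = n) (hs' : Nat.sqrt n' * Nat.sqrt n' = n')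
    (h : (n : ℤ) - (Nat.sqrt n : ℤ) = (n' : ℤ) - (Nat.sqrt n' : ℤ)) : n = n' := by
  set m : ℕ := Nat.sqrt n with hm
  set m' : ℕ := Nat.sqrt n' with hm'
  have hm1 : 1 ≤ m := Nat.sqrt_pos.mpr hn
  have hm1' : 1 ≤ m' := Nat.sqrt_pos.mpr hn'
  have hz : ((m:ℤ) - m') * ((m:ℤ) + m' - 1) = 0 := by
    have e1 : (n : ℤ) = (m:ℤ) * m := by exact_mod_cast congrArg (Nat.cast (R := ℤ)) hs.symm
    have e2 : (n' : ℤ) = (m':ℤ) * m' := by exact_mod_cast congrArg (Nat.cast (R := ℤ)) hs'.symm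
    nlinarith [h, e1, e2]
  rcases mul_eq_zero.mp hz with h0 | h0
  · have : (m:ℤ) = m' := by linarith
    have hmm : m = m' := by exact_mod_cast this
    rw [← hs, ← hs', hmm]
  · exfalso
    have : (1:ℤ) ≤ m := by exact_mod_cast hm1
    have : (1:ℤ) ≤ m' := by exact_mod_cast hm1'
    linarith

/-- `n - sqrt n` is injective on non-squares. -/
lemma phi_inj_nonsq {n n' : ℕ} (hn : 1 ≤ n) (hn' : 1 ≤ n')
    (hs : Nat.sqrt n * Nat.sqrt n ≠ n) (hs' : Nat.sqrt n' * Nat.sqrt n' ≠ n')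
    (h : (n : ℤ) - (Nat.sqrt n : ℤ) = (n' : ℤ) - (Nat.sqrt n' : ℤ)) : n = n' := by
  -- by symmetry assume n ≤ n'
  have key : ∀ a a' : ℕ, 1 ≤ a → 1 ≤ a' → Nat.sqrt a * Nat.sqrt a ≠ a →
      Nat.sqrt a' * Nat.sqrt a' ≠ a' →
      (a : ℤ) - (Nat.sqrt a : ℤ) = (a' : ℤ) - (Nat.sqrt a' : ℤ) → a < a' → False := by
    intro a a' _ _ _ hsa' heq hlt
    set m : ℕ := Nat.sqrt a with hm
    set m' : ℕ := Nat.sqrt a' with hm'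
    have h1 : (m':ℤ) * m' < a' := by
      have := Nat.sqrt_le a'
      rcases lt_or_eq_of_le this with h' | h'
      · exact_mod_cast h'
      · exact absurd h' hsa'
    have h2 : (a:ℤ) < ((m:ℤ) + 1) * ((m:ℤ) + 1) := by
      have := Nat.lt_succ_sqrt a
      exact_mod_cast this
    have h3 : (m':ℤ) = (m:ℤ) + ((a':ℤ) - a) := by linarith
    have h4 : (1:ℤ) ≤ (a':ℤ) - a := by
      have : (a:ℤ) < (a':ℤ) := by exact_mod_cast hlt
      linarith
    have h5 : (0:ℤ) ≤ m := by positivity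
    nlinarith [h1, h2, h3, h4, h5]
  rcases lt_trichotomy n n' with hlt | heq | hlt
  · exact absurd (key n n' hn hn' hs hs' h hlt) (fun x => x)
  · exact heq
  · exact absurd (key n' n hn' hn hs' hs h.symm hlt) (fun x => x)

end Stmt11

namespace Stmt11

lemma inj_sum_le (T : Finset ℕ)
    (hinj : ∀ n ∈ T, ∀ n' ∈ T,
      (n:ℤ) - (Nat.sqrt n : ℤ) = (n':ℤ) - (Nat.sqrt n' : ℤ) → n = n')
    (A B : ℤ → ℝ≥0∞) :
    ∑' x : ℤ, ∑ n ∈ T, A (x - (Nat.sqrt n : ℤ)) * B (x - (n:ℤ)) ≤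
      (∑' u, A u) * (∑' u, B u) := by
  rw [Summable.tsum_finsetSum (fun n _ => ENNReal.summable)]
  have step1 : ∀ n : ℕ, ∑' x : ℤ, A (x - (Nat.sqrt n : ℤ)) * B (x - (n:ℤ)) =
      ∑' y : ℤ, A (y + ((n:ℤ) - (Nat.sqrt n : ℤ))) * B y := by
    intro n
    rw [← (Equiv.addRight (n:ℤ)).tsum_eq (fun x => A (x - (Nat.sqrt n : ℤ)) * B (x - (n:ℤ)))]
    apply tsum_congr; intro y
    simp only [Equiv.coe_addRight]
    congr 2
    · ring
    · ring
  calc ∑ n ∈ T, ∑' x : ℤ, A (x - (Nat.sqrt n : ℤ)) * B (x - (n:ℤ))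
      = ∑ n ∈ T, ∑' y : ℤ, A (y + ((n:ℤ) - (Nat.sqrt n : ℤ))) * B y := by
        exact Finset.sum_congr rfl (fun n _ => step1 n)
    _ = ∑' y : ℤ, ∑ n ∈ T, A (y + ((n:ℤ) - (Nat.sqrt n : ℤ))) * B y := by
        rw [Summable.tsum_finsetSum (fun n _ => ENNReal.summable)]
    _ = ∑' y : ℤ, (∑ n ∈ T, A (y + ((n:ℤ) - (Nat.sqrt n : ℤ)))) * B y := by
        apply tsum_congr; intro y
        rw [Finset.sum_mul]
    _ ≤ ∑' y : ℤ, (∑' u, A u) * B y := by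
        apply ENNReal.tsum_le_tsum; intro y
        apply mul_le_mul_left
        have himage : ∑ n ∈ T, A (y + ((n:ℤ) - (Nat.sqrt n : ℤ)))
            = ∑ z ∈ T.image (fun n : ℕ => y + ((n:ℤ) - (Nat.sqrt n : ℤ))), A z := by
          rw [Finset.sum_image]
          intro n hn n' hn' he
          exact hinj n hn n' hn' (by linarith [he])
        rw [himage]
        exact ENNReal.sum_le_tsum _
    _ = (∑' u, A u) * (∑' u, B u) := ENNReal.tsum_mul_left

end Stmt11

namespace Stmt11

lemma inj_sum_le2 (N : ℕ) (A B : ℤ → ℝ≥0∞) :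
    ∑' x : ℤ, ∑ n ∈ Finset.Icc 1 N, A (x - (Nat.sqrt n : ℤ)) * B (x - (n:ℤ)) ≤
      2 * ((∑' u, A u) * (∑' u, B u)) := by
  classical
  set T1 : Finset ℕ := (Finset.Icc 1 N).filter (fun n => Nat.sqrt n * Nat.sqrt n = n) with hT1
  set T2 : Finset ℕ := (Finset.Icc 1 N).filter (fun n => ¬ (Nat.sqrt n * Nat.sqrt n = n)) with hT2
  have hsplit : ∀ x : ℤ, ∑ n ∈ Finset.Icc 1 N, A (x - (Nat.sqrt n : ℤ)) * B (x - (n:ℤ))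
      = (∑ n ∈ T1, A (x - (Nat.sqrt n : ℤ)) * B (x - (n:ℤ)))
        + ∑ n ∈ T2, A (x - (Nat.sqrt n : ℤ)) * B (x - (n:ℤ)) := by
    intro x
    rw [hT1, hT2, Finset.sum_filter_add_sum_filter_not]
  calc ∑' x : ℤ, ∑ n ∈ Finset.Icc 1 N, A (x - (Nat.sqrt n : ℤ)) * B (x - (n:ℤ))
      = (∑' x : ℤ, ∑ n ∈ T1, A (x - (Nat.sqrt n : ℤ)) * B (x - (n:ℤ)))
        + ∑' x : ℤ, ∑ n ∈ T2, A (x - (Nat.sqrt n : ℤ)) * B (x - (n:ℤ)) := by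
        rw [← ENNReal.tsum_add]
        exact tsum_congr hsplit
    _ ≤ (∑' u, A u) * (∑' u, B u) + (∑' u, A u) * (∑' u, B u) := by
        gcongr
        · apply inj_sum_le
          intro n hn n' hn' he
          rw [hT1, Finset.mem_filter, Finset.mem_Icc] at hn hn'
          exact phi_inj_sq hn.1.1 hn'.1.1 hn.2 hn'.2 he
        · apply inj_sum_le
          intro n hn n' hn' he
          rw [hT2, Finset.mem_filter, Finset.mem_Icc] at hn hn'
          exact phi_inj_nonsq hn.1.1 hn'.1.1 hn.2 hn'.2 he
    _ = 2 * ((∑' u, A u) * (∑' u, B u)) := (two_mul _).symm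

end Stmt11

namespace Stmt11

lemma div_bounds (Nz x : ℤ) (hN : 0 < Nz) : Nz * (x / Nz) ≤ x ∧ x < Nz * (x / Nz) + Nz := by
  have h1 := Int.mul_ediv_add_emod x Nz
  have h2 := Int.emod_nonneg x (ne_of_gt hN)
  have h3 := Int.emod_lt_of_pos x hN
  constructor <;> linarith

lemma mem_block_iff (Nz x k : ℤ) (hN : 0 < Nz) :
    (k * Nz ≤ x ∧ x < k * Nz + Nz) ↔ k = x / Nz := by
  obtain ⟨hb1, hb2⟩ := div_bounds Nz x hN
  constructor
  · rintro ⟨h1, h2⟩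
    have e1 : k < x / Nz + 1 := by
      have : k * Nz < (x / Nz + 1) * Nz := by
        have : (x / Nz + 1) * Nz = Nz * (x / Nz) + Nz := by ring
        rw [this]; linarith
      exact (mul_lt_mul_iff_left₀ hN).mp this
    have e2 : x / Nz < k + 1 := by
      have : (x / Nz) * Nz < (k + 1) * Nz := by
        have e : (x / Nz) * Nz = Nz * (x / Nz) := by ring
        rw [e]
        have e' : (k+1) * Nz = k * Nz + Nz := by ring
        rw [e']; linarith
      exact (mul_lt_mul_iff_left₀ hN).mp this
    omega
  · rintro rfl
    constructor
    · linarith [hb1]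
    · linarith [hb2]

lemma mem_Eblock_iff (Nz x k : ℤ) (hN : 0 < Nz) :
    ((k-1) * Nz ≤ x ∧ x < (k+1) * Nz) ↔ (k = x / Nz ∨ k = x / Nz + 1) := by
  obtain ⟨hb1, hb2⟩ := div_bounds Nz x hN
  constructor
  · rintro ⟨h1, h2⟩
    have e1 : k - 1 < x / Nz + 1 := by
      have : (k - 1) * Nz < (x / Nz + 1) * Nz := by nlinarith
      exact (mul_lt_mul_iff_left₀ hN).mp this
    have e2 : x / Nz < k + 1 := by
      have : (x / Nz) * Nz < (k + 1) * Nz := by nlinarith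
      exact (mul_lt_mul_iff_left₀ hN).mp this
    omega
  · intro h
    rcases h with rfl | rfl
    · constructor <;> nlinarith
    · constructor <;> nlinarith

lemma block_partition (Nz : ℤ) (hN : 0 < Nz) (h : ℤ → ℝ≥0∞) :
    ∑' k : ℤ, ∑' x : ℤ, (if x ∈ Finset.Ico (k*Nz) (k*Nz+Nz) then h x else 0) = ∑' x, h x := by
  rw [ENNReal.tsum_comm]
  apply tsum_congr; intro x
  rw [tsum_eq_single (x / Nz)]
  · simp only [Finset.mem_Ico]
    rw [if_pos]
    exact (mem_block_iff Nz x _ hN).mpr rfl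
  · intro k hk
    simp only [Finset.mem_Ico]
    rw [if_neg]
    intro hmem
    exact hk ((mem_block_iff Nz x k hN).mp hmem)

lemma Eblock_count (Nz : ℤ) (hN : 0 < Nz) (x : ℤ) :
    ∑' k : ℤ, (if x ∈ Finset.Ico ((k-1)*Nz) ((k+1)*Nz) then (1:ℝ≥0∞) else 0) = 2 := by
  classical
  rw [tsum_eq_sum (s := {x / Nz, x / Nz + 1})]
  · rw [Finset.sum_pair (by omega)]
    rw [if_pos, if_pos]
    · norm_num
    · simp only [Finset.mem_Ico]
      exact (mem_Eblock_iff Nz x _ hN).mpr (Or.inr rfl)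
    · simp only [Finset.mem_Ico]
      exact (mem_Eblock_iff Nz x _ hN).mpr (Or.inl rfl)
  · intro k hk
    simp only [Finset.mem_insert, Finset.mem_singleton] at hk
    push_neg at hk
    rw [if_neg]
    intro hmem
    simp only [Finset.mem_Ico] at hmem
    rcases (mem_Eblock_iff Nz x k hN).mp hmem with h' | h'
    · exact hk.1 h'
    · exact hk.2 h'

end Stmt11

namespace Stmt11

/-- pointwise three-factor Hölder on the n-sum -/
lemma nsum_interp (T : Finset ℕ) (l μ1 μ2 p1 p2 : ℝ) (h0p1 : 0 ≤ p1) (h0p2 : 0 ≤ p2)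
    (hl : 0 ≤ l) (hμ1 : 0 ≤ μ1)
    (hμ2 : 0 ≤ μ2) (hsum3 : l + μ1 + μ2 = 1) (hta : p1 * (l + μ1) = 1)
    (htb : p2 * (l + μ2) = 1) (α β : ℕ → ℝ≥0∞) :
    ∑ n ∈ T, α n * β n ≤
      (∑ n ∈ T, α n ^ p1 * β n ^ p2) ^ l * (∑ n ∈ T, α n ^ p1) ^ μ1 *
        (∑ n ∈ T, β n ^ p2) ^ μ2 := by
  have key : ∀ n : ℕ, α n * β n =
      (α n ^ p1 * β n ^ p2) ^ l * (α n ^ p1) ^ μ1 * (β n ^ p2) ^ μ2 := by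
    intro n
    rw [ENNReal.mul_rpow_of_nonneg _ _ hl, ← ENNReal.rpow_mul, ← ENNReal.rpow_mul,
      ← ENNReal.rpow_mul, ← ENNReal.rpow_mul]
    calc α n * β n = α n ^ (p1 * (l + μ1)) * β n ^ (p2 * (l + μ2)) := by
          rw [hta, htb, ENNReal.rpow_one, ENNReal.rpow_one]
      _ = α n ^ (p1 * l) * α n ^ (p1 * μ1) * (β n ^ (p2 * l) * β n ^ (p2 * μ2)) := by
          rw [← ENNReal.rpow_add_of_nonneg _ _ (mul_nonneg h0p1 hl) (mul_nonneg h0p1 hμ1),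
            ← ENNReal.rpow_add_of_nonneg _ _ (mul_nonneg h0p2 hl) (mul_nonneg h0p2 hμ2)]
          congr 1 <;> ring_nf
      _ = α n ^ (p1 * l) * β n ^ (p2 * l) * α n ^ (p1 * μ1) * β n ^ (p2 * μ2) := by ring
  calc ∑ n ∈ T, α n * β n
      = ∑ n ∈ T, (α n ^ p1 * β n ^ p2) ^ l * (α n ^ p1) ^ μ1 * (β n ^ p2) ^ μ2 :=
        Finset.sum_congr rfl (fun n _ => key n)
    _ ≤ _ := sum_hoelder3 T l μ1 μ2 hl hμ1 hμ2 hsum3 _ _ _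

/-- Local (single block) estimate, `p ≤ 1` case. -/
lemma local_est (p1 p2 p : ℝ) (h1 : 1 < p1) (h2 : 1 < p2) (hp : p⁻¹ = p1⁻¹ + p2⁻¹)
    (hppos : 0 < p) (hple : p ≤ 1) (N : ℕ) (hN : 1 ≤ N) (a' b' : ℤ → ℝ≥0∞) (χ : ℤ → ℝ≥0∞)
    (hχ : ∀ x, χ x = 0 ∨ χ x = 1) (hcard : ∑' x : ℤ, χ x ≤ (N:ℝ≥0∞)) :
    ∑' x : ℤ, χ x * (∑ n ∈ Finset.Icc 1 N, a' (x - (Nat.sqrt n : ℤ)) * b' (x - (n:ℤ))) ^ p ≤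
      2 * (N:ℝ≥0∞) ^ p * (∑' u, a' u ^ p1) ^ (p * p1⁻¹) * (∑' u, b' u ^ p2) ^ (p * p2⁻¹) := by
  have hp1pos : 0 < p1 := lt_trans zero_lt_one h1
  have hp2pos : 0 < p2 := lt_trans zero_lt_one h2
  have hp1ne : p1 ≠ 0 := ne_of_gt hp1pos
  have hp2ne : p2 ≠ 0 := ne_of_gt hp2pos
  have hpne : p ≠ 0 := ne_of_gt hppos
  -- exponents
  set l : ℝ := p⁻¹ - 1 with hl_def
  set μ1 : ℝ := 1 - p2⁻¹ with hμ1_def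
  set μ2 : ℝ := 1 - p1⁻¹ with hμ2_def
  have hl : 0 ≤ l := by
    have : 1 ≤ p⁻¹ := by
      rw [le_inv_comm₀ zero_lt_one hppos]; simpa using hple
    simp only [hl_def]; linarith
  have hμ1 : 0 ≤ μ1 := by
    have : p2⁻¹ < 1 := by
      rw [inv_lt_one_iff₀]; right; exact h2
    simp only [hμ1_def]; linarith
  have hμ2 : 0 ≤ μ2 := by
    have : p1⁻¹ < 1 := by
      rw [inv_lt_one_iff₀]; right; exact h1
    simp only [hμ2_def]; linarith
  have hsum3 : l + μ1 + μ2 = 1 := by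
    rw [hl_def, hμ1_def, hμ2_def, hp]; ring
  have hlμ1 : l + μ1 = p1⁻¹ := by rw [hl_def, hμ1_def, hp]; ring
  have hlμ2 : l + μ2 = p2⁻¹ := by rw [hl_def, hμ2_def, hp]; ring
  have hta : p1 * (l + μ1) = 1 := by rw [hlμ1, mul_inv_cancel₀ hp1ne]
  have htb : p2 * (l + μ2) = 1 := by rw [hlμ2, mul_inv_cancel₀ hp2ne]
  -- weights for the x-Hölder
  set w1 : ℝ := l * p with hw1_def
  set w2 : ℝ := μ1 * p with hw2_def
  set w3 : ℝ := μ2 * p with hw3_def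
  set w4 : ℝ := 1 - p with hw4_def
  have hw1 : 0 ≤ w1 := mul_nonneg hl (le_of_lt hppos)
  have hw2 : 0 ≤ w2 := mul_nonneg hμ1 (le_of_lt hppos)
  have hw3 : 0 ≤ w3 := mul_nonneg hμ2 (le_of_lt hppos)
  have hw4 : 0 ≤ w4 := by simp only [hw4_def]; linarith
  have hw1eq : w1 = 1 - p := by
    rw [hw1_def, hl_def]; field_simp
  have hwsum : w1 + w2 + w3 + w4 = 1 := by
    have h' : (l + μ1 + μ2) * p = p := by rw [hsum3]; ring
    rw [hw1_def, hw2_def, hw3_def, hw4_def]; nlinarith [h']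
  have hw12 : w1 + w2 = p * p1⁻¹ := by
    rw [hw1_def, hw2_def, ← add_mul, hlμ1]; ring
  have hw13 : w1 + w3 = p * p2⁻¹ := by
    rw [hw1_def, hw3_def, ← add_mul, hlμ2]; ring
  have hw234 : w2 + w3 + w4 = p := by
    have := hwsum
    rw [hw1eq] at this; linarith
  set F : ℝ≥0∞ := ∑' u, a' u ^ p1 with hF
  set G : ℝ≥0∞ := ∑' u, b' u ^ p2 with hG
  -- pointwise with χ and power p
  have pointwise2 : ∀ x : ℤ, χ x *
      (∑ n ∈ Finset.Icc 1 N, a' (x - (Nat.sqrt n : ℤ)) * b' (x - (n:ℤ))) ^ p ≤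
      (∑ n ∈ Finset.Icc 1 N, (a' (x - (Nat.sqrt n : ℤ))) ^ p1 * (b' (x - (n:ℤ))) ^ p2) ^ w1 *
      (∑ n ∈ Finset.Icc 1 N, (a' (x - (Nat.sqrt n : ℤ))) ^ p1) ^ w2 *
      (∑ n ∈ Finset.Icc 1 N, (b' (x - (n:ℤ))) ^ p2) ^ w3 * χ x ^ w4 := by
    intro x
    rcases hχ x with h0 | h1x
    · rw [h0, zero_mul]
      exact zero_le
    · rw [h1x]
      simp only [ENNReal.one_rpow, one_mul, mul_one]
      calc (∑ n ∈ Finset.Icc 1 N, a' (x - (Nat.sqrt n : ℤ)) * b' (x - (n:ℤ))) ^ p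
          ≤ ((∑ n ∈ Finset.Icc 1 N, (a' (x - (Nat.sqrt n : ℤ))) ^ p1 * (b' (x - (n:ℤ))) ^ p2) ^ l *
            (∑ n ∈ Finset.Icc 1 N, (a' (x - (Nat.sqrt n : ℤ))) ^ p1) ^ μ1 *
            (∑ n ∈ Finset.Icc 1 N, (b' (x - (n:ℤ))) ^ p2) ^ μ2) ^ p := by
            apply ENNReal.rpow_le_rpow _ (le_of_lt hppos)
            exact nsum_interp _ l μ1 μ2 p1 p2 (le_of_lt hp1pos) (le_of_lt hp2pos) hl hμ1 hμ2 hsum3 hta htb _ _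
        _ = _ := by
            rw [ENNReal.mul_rpow_of_nonneg _ _ (le_of_lt hppos),
              ENNReal.mul_rpow_of_nonneg _ _ (le_of_lt hppos), ← ENNReal.rpow_mul,
              ← ENNReal.rpow_mul, ← ENNReal.rpow_mul, hw1_def, hw2_def, hw3_def]
  -- sum bounds
  have hJsum : ∑' x : ℤ, ∑ n ∈ Finset.Icc 1 N,
      (a' (x - (Nat.sqrt n : ℤ))) ^ p1 * (b' (x - (n:ℤ))) ^ p2 ≤ 2 * (F * G) :=
    inj_sum_le2 N (fun u => a' u ^ p1) (fun u => b' u ^ p2)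
  have hAsum : ∑' x : ℤ, ∑ n ∈ Finset.Icc 1 N, (a' (x - (Nat.sqrt n : ℤ))) ^ p1
      = (N:ℝ≥0∞) * F := by
    rw [Summable.tsum_finsetSum (fun n _ => ENNReal.summable)]
    have h' : ∀ n ∈ Finset.Icc 1 N, ∑' x : ℤ, (a' (x - (Nat.sqrt n : ℤ))) ^ p1 = F := by
      intro n _
      exact (Equiv.subRight ((Nat.sqrt n : ℤ))).tsum_eq (fun u => a' u ^ p1)
    rw [Finset.sum_congr rfl h', Finset.sum_const, Nat.card_Icc]
    simp
  have hBsum : ∑' x : ℤ, ∑ n ∈ Finset.Icc 1 N, (b' (x - (n:ℤ))) ^ p2 = (N:ℝ≥0∞) * G := by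
    rw [Summable.tsum_finsetSum (fun n _ => ENNReal.summable)]
    have h' : ∀ n ∈ Finset.Icc 1 N, ∑' x : ℤ, (b' (x - (n:ℤ))) ^ p2 = G := by
      intro n _
      exact (Equiv.subRight ((n:ℤ))).tsum_eq (fun u => b' u ^ p2)
    rw [Finset.sum_congr rfl h', Finset.sum_const, Nat.card_Icc]
    simp
  -- main Hölder in x
  calc ∑' x : ℤ, χ x * (∑ n ∈ Finset.Icc 1 N, a' (x - (Nat.sqrt n : ℤ)) * b' (x - (n:ℤ))) ^ p
      ≤ ∑' x : ℤ,
        (∑ n ∈ Finset.Icc 1 N, (a' (x - (Nat.sqrt n : ℤ))) ^ p1 * (b' (x - (n:ℤ))) ^ p2) ^ w1 *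
        (∑ n ∈ Finset.Icc 1 N, (a' (x - (Nat.sqrt n : ℤ))) ^ p1) ^ w2 *
        (∑ n ∈ Finset.Icc 1 N, (b' (x - (n:ℤ))) ^ p2) ^ w3 * χ x ^ w4 :=
        ENNReal.tsum_le_tsum pointwise2
    _ ≤ (∑' x : ℤ, ∑ n ∈ Finset.Icc 1 N,
          (a' (x - (Nat.sqrt n : ℤ))) ^ p1 * (b' (x - (n:ℤ))) ^ p2) ^ w1 *
        (∑' x : ℤ, ∑ n ∈ Finset.Icc 1 N, (a' (x - (Nat.sqrt n : ℤ))) ^ p1) ^ w2 *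
        (∑' x : ℤ, ∑ n ∈ Finset.Icc 1 N, (b' (x - (n:ℤ))) ^ p2) ^ w3 *
        (∑' x : ℤ, χ x) ^ w4 :=
        tsum_hoelder4 w1 w2 w3 w4 hw1 hw2 hw3 hw4 hwsum _ _ _ _
    _ ≤ (2 * (F * G)) ^ w1 * ((N:ℝ≥0∞) * F) ^ w2 * ((N:ℝ≥0∞) * G) ^ w3 * (N:ℝ≥0∞) ^ w4 := by
        gcongr <;> first
          | exact hJsum
          | exact le_of_eq hAsum
          | exact le_of_eq hBsum
          | exact hcard
    _ = (2:ℝ≥0∞) ^ w1 * ((N:ℝ≥0∞) ^ (w2 + w3 + w4)) * (F ^ (w1 + w2)) * (G ^ (w1 + w3)) := by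
        rw [ENNReal.mul_rpow_of_nonneg _ _ hw1, ENNReal.mul_rpow_of_nonneg _ _ hw1,
          ENNReal.mul_rpow_of_nonneg _ _ hw2, ENNReal.mul_rpow_of_nonneg _ _ hw3,
          ENNReal.rpow_add_of_nonneg _ _ (add_nonneg hw2 hw3) hw4,
          ENNReal.rpow_add_of_nonneg _ _ hw2 hw3,
          ENNReal.rpow_add_of_nonneg _ _ hw1 hw2,
          ENNReal.rpow_add_of_nonneg _ _ hw1 hw3]
        ring
    _ ≤ 2 * (N:ℝ≥0∞) ^ p * F ^ (p * p1⁻¹) * G ^ (p * p2⁻¹) := by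
        rw [hw234, hw12, hw13]
        gcongr
        calc (2:ℝ≥0∞) ^ w1 ≤ (2:ℝ≥0∞) ^ (1:ℝ) := by
              apply ENNReal.rpow_le_rpow_of_exponent_le (by norm_num)
              rw [hw1eq]; linarith
          _ = 2 := ENNReal.rpow_one 2

end Stmt11

namespace Stmt11

lemma core_le_one (p1 p2 p : ℝ) (h1 : 1 < p1) (h2 : 1 < p2) (hp : p⁻¹ = p1⁻¹ + p2⁻¹)
    (hppos : 0 < p) (hple : p ≤ 1) (N : ℕ) (hN : 1 ≤ N) (a b : ℤ → ℝ≥0∞) :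
    ∑' x : ℤ, (∑ n ∈ Finset.Icc 1 N, a (x - (Nat.sqrt n : ℤ)) * b (x - (n:ℤ))) ^ p ≤
      4 * (N:ℝ≥0∞) ^ p * (∑' u, a u ^ p1) ^ (p * p1⁻¹) * (∑' u, b u ^ p2) ^ (p * p2⁻¹) := by
  classical
  have hp1pos : 0 < p1 := lt_trans zero_lt_one h1
  have hp2pos : 0 < p2 := lt_trans zero_lt_one h2
  set Nz : ℤ := (N:ℤ) with hNz_def
  have hNz : 0 < Nz := by rw [hNz_def]; exact_mod_cast hN
  set ak : ℤ → ℤ → ℝ≥0∞ :=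
    fun k u => if u ∈ Finset.Ico ((k-1)*Nz) ((k+1)*Nz) then a u else 0 with hak
  set bk : ℤ → ℤ → ℝ≥0∞ :=
    fun k u => if u ∈ Finset.Ico ((k-1)*Nz) ((k+1)*Nz) then b u else 0 with hbk
  set χk : ℤ → ℤ → ℝ≥0∞ :=
    fun k x => if x ∈ Finset.Ico (k*Nz) (k*Nz+Nz) then (1:ℝ≥0∞) else 0 with hχk
  -- localization : for x in block k the sum agrees with localized version
  have hloc : ∀ k x, x ∈ Finset.Ico (k*Nz) (k*Nz+Nz) → ∀ n ∈ Finset.Icc 1 N,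
      a (x - (Nat.sqrt n : ℤ)) = ak k (x - (Nat.sqrt n : ℤ)) ∧
      b (x - (n:ℤ)) = bk k (x - (n:ℤ)) := by
    intro k x hx n hn
    rw [Finset.mem_Ico] at hx
    rw [Finset.mem_Icc] at hn
    have hsq1 : 1 ≤ (Nat.sqrt n : ℤ) := by
      have : 1 ≤ Nat.sqrt n := Nat.sqrt_pos.mpr hn.1
      exact_mod_cast this
    have hsq2 : (Nat.sqrt n : ℤ) ≤ Nz := by
      have : Nat.sqrt n ≤ N := le_trans (Nat.sqrt_le_self n) hn.2
      rw [hNz_def]; exact_mod_cast this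
    have hn1 : 1 ≤ (n : ℤ) := by exact_mod_cast hn.1
    have hn2 : (n : ℤ) ≤ Nz := by rw [hNz_def]; exact_mod_cast hn.2
    constructor
    · simp only [hak]
      rw [if_pos]
      rw [Finset.mem_Ico]
      constructor
      · nlinarith [hx.1]
      · nlinarith [hx.2]
    · simp only [hbk]
      rw [if_pos]
      rw [Finset.mem_Ico]
      constructor
      · nlinarith [hx.1]
      · nlinarith [hx.2]
  -- per-block rewriting
  have hblock : ∀ k, (∑' x : ℤ, if x ∈ Finset.Ico (k*Nz) (k*Nz+Nz) then
      (∑ n ∈ Finset.Icc 1 N, a (x - (Nat.sqrt n : ℤ)) * b (x - (n:ℤ))) ^ p else 0)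
      = ∑' x : ℤ, χk k x *
        (∑ n ∈ Finset.Icc 1 N, ak k (x - (Nat.sqrt n : ℤ)) * bk k (x - (n:ℤ))) ^ p := by
    intro k
    apply tsum_congr; intro x
    by_cases hx : x ∈ Finset.Ico (k*Nz) (k*Nz+Nz)
    · rw [if_pos hx]
      simp only [hχk, if_pos hx, one_mul]
      congr 1
      apply Finset.sum_congr rfl
      intro n hn
      rw [(hloc k x hx n hn).1, (hloc k x hx n hn).2]
    · rw [if_neg hx]
      simp only [hχk, if_neg hx, zero_mul]
  -- localized norms
  have hFsum : ∑' k : ℤ, ∑' u : ℤ, (ak k u) ^ p1 = 2 * ∑' u, a u ^ p1 := by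
    have h1' : ∀ k u, (ak k u) ^ p1 =
        (a u ^ p1) * (if u ∈ Finset.Ico ((k-1)*Nz) ((k+1)*Nz) then (1:ℝ≥0∞) else 0) := by
      intro k u
      simp only [hak]
      by_cases h : u ∈ Finset.Ico ((k-1)*Nz) ((k+1)*Nz)
      · rw [if_pos h, if_pos h, mul_one]
      · rw [if_neg h, if_neg h, mul_zero, ENNReal.zero_rpow_of_pos hp1pos]
    calc ∑' k : ℤ, ∑' u : ℤ, (ak k u) ^ p1
        = ∑' u : ℤ, ∑' k : ℤ, (a u ^ p1) *
          (if u ∈ Finset.Ico ((k-1)*Nz) ((k+1)*Nz) then (1:ℝ≥0∞) else 0) := by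
          rw [ENNReal.tsum_comm]
          exact tsum_congr (fun u => tsum_congr (fun k => h1' k u))
      _ = ∑' u : ℤ, (a u ^ p1) * 2 := by
          apply tsum_congr; intro u
          rw [ENNReal.tsum_mul_left, Eblock_count Nz hNz u]
      _ = 2 * ∑' u, a u ^ p1 := by
          rw [← ENNReal.tsum_mul_left]
          exact tsum_congr (fun u => mul_comm _ _)
  have hGsum : ∑' k : ℤ, ∑' u : ℤ, (bk k u) ^ p2 = 2 * ∑' u, b u ^ p2 := by
    have h1' : ∀ k u, (bk k u) ^ p2 =
        (b u ^ p2) * (if u ∈ Finset.Ico ((k-1)*Nz) ((k+1)*Nz) then (1:ℝ≥0∞) else 0) := by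
      intro k u
      simp only [hbk]
      by_cases h : u ∈ Finset.Ico ((k-1)*Nz) ((k+1)*Nz)
      · rw [if_pos h, if_pos h, mul_one]
      · rw [if_neg h, if_neg h, mul_zero, ENNReal.zero_rpow_of_pos hp2pos]
    calc ∑' k : ℤ, ∑' u : ℤ, (bk k u) ^ p2
        = ∑' u : ℤ, ∑' k : ℤ, (b u ^ p2) *
          (if u ∈ Finset.Ico ((k-1)*Nz) ((k+1)*Nz) then (1:ℝ≥0∞) else 0) := by
          rw [ENNReal.tsum_comm]
          exact tsum_congr (fun u => tsum_congr (fun k => h1' k u))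
      _ = ∑' u : ℤ, (b u ^ p2) * 2 := by
          apply tsum_congr; intro u
          rw [ENNReal.tsum_mul_left, Eblock_count Nz hNz u]
      _ = 2 * ∑' u, b u ^ p2 := by
          rw [← ENNReal.tsum_mul_left]
          exact tsum_congr (fun u => mul_comm _ _)
  -- χ properties
  have hχ01 : ∀ k x, χk k x = 0 ∨ χk k x = 1 := by
    intro k x
    simp only [hχk]
    by_cases h : x ∈ Finset.Ico (k*Nz) (k*Nz+Nz)
    · right; rw [if_pos h]
    · left; rw [if_neg h]
  have hχcard : ∀ k, ∑' x : ℤ, χk k x ≤ (N:ℝ≥0∞) := by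
    intro k
    simp only [hχk]
    refine le_of_eq ?_
    rw [tsum_eq_sum (s := Finset.Ico (k*Nz) (k*Nz+Nz)) (fun x hx => by rw [if_neg hx])]
    calc ∑ x ∈ Finset.Ico (k*Nz) (k*Nz+Nz), (if x ∈ Finset.Ico (k*Nz) (k*Nz+Nz)
          then (1:ℝ≥0∞) else 0)
        = ∑ x ∈ Finset.Ico (k*Nz) (k*Nz+Nz), (1:ℝ≥0∞) :=
          Finset.sum_congr rfl (fun x hx => by rw [if_pos hx])
      _ = ((Finset.Ico (k*Nz) (k*Nz+Nz)).card : ℝ≥0∞) := by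
          rw [Finset.sum_const, nsmul_eq_mul, mul_one]
      _ = (N:ℝ≥0∞) := by
          rw [Int.card_Ico]
          have he : k*Nz + Nz - k*Nz = Nz := by ring
          rw [he, hNz_def, Int.toNat_natCast]
  -- exponent facts
  have hw : p * p1⁻¹ + p * p2⁻¹ = 1 := by
    rw [← mul_add, ← hp, mul_inv_cancel₀ (ne_of_gt hppos)]
  have hwa : 0 ≤ p * p1⁻¹ := by positivity
  have hwb : p * p1⁻¹ ≤ 1 := by nlinarith [mul_nonneg (le_of_lt hppos) (le_of_lt (inv_pos.mpr hp2pos))]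
  have hw2eq : 1 - p * p1⁻¹ = p * p2⁻¹ := by linarith
  -- main chain
  calc ∑' x : ℤ, (∑ n ∈ Finset.Icc 1 N, a (x - (Nat.sqrt n : ℤ)) * b (x - (n:ℤ))) ^ p
      = ∑' k : ℤ, ∑' x : ℤ, (if x ∈ Finset.Ico (k*Nz) (k*Nz+Nz) then
          (∑ n ∈ Finset.Icc 1 N, a (x - (Nat.sqrt n : ℤ)) * b (x - (n:ℤ))) ^ p else 0) :=
        (block_partition Nz hNz _).symm
    _ = ∑' k : ℤ, ∑' x : ℤ, χk k x *
          (∑ n ∈ Finset.Icc 1 N, ak k (x - (Nat.sqrt n : ℤ)) * bk k (x - (n:ℤ))) ^ p :=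
        tsum_congr hblock
    _ ≤ ∑' k : ℤ, 2 * (N:ℝ≥0∞) ^ p * (∑' u, (ak k u) ^ p1) ^ (p * p1⁻¹) *
          (∑' u, (bk k u) ^ p2) ^ (p * p2⁻¹) := by
        apply ENNReal.tsum_le_tsum; intro k
        exact local_est p1 p2 p h1 h2 hp hppos hple N hN (ak k) (bk k) (χk k)
          (hχ01 k) (hχcard k)
    _ = 2 * (N:ℝ≥0∞) ^ p * ∑' k : ℤ, (∑' u, (ak k u) ^ p1) ^ (p * p1⁻¹) *
          (∑' u, (bk k u) ^ p2) ^ (p * p2⁻¹) := by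
        rw [← ENNReal.tsum_mul_left]
        apply tsum_congr; intro k
        ring
    _ ≤ 2 * (N:ℝ≥0∞) ^ p * ((∑' k : ℤ, ∑' u, (ak k u) ^ p1) ^ (p * p1⁻¹) *
          (∑' k : ℤ, ∑' u, (bk k u) ^ p2) ^ (p * p2⁻¹)) := by
        apply mul_le_mul_right
        have := tsum_hoelder2 (p * p1⁻¹) hwa hwb
          (fun k => ∑' u, (ak k u) ^ p1) (fun k => ∑' u, (bk k u) ^ p2)
        rw [hw2eq] at this
        exact this
    _ = 2 * (N:ℝ≥0∞) ^ p * ((2 * ∑' u, a u ^ p1) ^ (p * p1⁻¹) *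
          (2 * ∑' u, b u ^ p2) ^ (p * p2⁻¹)) := by
        rw [hFsum, hGsum]
    _ = 4 * (N:ℝ≥0∞) ^ p * (∑' u, a u ^ p1) ^ (p * p1⁻¹) * (∑' u, b u ^ p2) ^ (p * p2⁻¹) := by
        rw [ENNReal.mul_rpow_of_nonneg _ _ hwa,
          ENNReal.mul_rpow_of_nonneg _ _ (by positivity : (0:ℝ) ≤ p * p2⁻¹)]
        have h2' : (2:ℝ≥0∞) ^ (p * p1⁻¹) * (2:ℝ≥0∞) ^ (p * p2⁻¹) = 2 := by
          rw [← ENNReal.rpow_add_of_nonneg _ _ hwa (by positivity), hw, ENNReal.rpow_one]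
        calc 2 * (N:ℝ≥0∞) ^ p * ((2:ℝ≥0∞) ^ (p * p1⁻¹) * (∑' u, a u ^ p1) ^ (p * p1⁻¹) *
              ((2:ℝ≥0∞) ^ (p * p2⁻¹) * (∑' u, b u ^ p2) ^ (p * p2⁻¹)))
            = 2 * ((2:ℝ≥0∞) ^ (p * p1⁻¹) * (2:ℝ≥0∞) ^ (p * p2⁻¹)) * (N:ℝ≥0∞) ^ p *
              (∑' u, a u ^ p1) ^ (p * p1⁻¹) * (∑' u, b u ^ p2) ^ (p * p2⁻¹) := by ring
          _ = _ := by rw [h2']; norm_num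

end Stmt11

namespace Stmt11

lemma core_ge_one (p1 p2 p : ℝ) (h1 : 1 < p1) (h2 : 1 < p2) (hp : p⁻¹ = p1⁻¹ + p2⁻¹)
    (hppos : 0 < p) (hpge : 1 ≤ p) (N : ℕ) (hN : 1 ≤ N) (a b : ℤ → ℝ≥0∞) :
    ∑' x : ℤ, (∑ n ∈ Finset.Icc 1 N, a (x - (Nat.sqrt n : ℤ)) * b (x - (n:ℤ))) ^ p ≤
      4 * (N:ℝ≥0∞) ^ p * (∑' u, a u ^ p1) ^ (p * p1⁻¹) * (∑' u, b u ^ p2) ^ (p * p2⁻¹) := by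
  have hp1pos : 0 < p1 := lt_trans zero_lt_one h1
  have hp2pos : 0 < p2 := lt_trans zero_lt_one h2
  have hpne : p ≠ 0 := ne_of_gt hppos
  have hw : p * p1⁻¹ + p * p2⁻¹ = 1 := by
    rw [← mul_add, ← hp, mul_inv_cancel₀ hpne]
  have hwa : 0 ≤ p * p1⁻¹ := by positivity
  have hwb : p * p1⁻¹ ≤ 1 := by nlinarith [mul_nonneg (le_of_lt hppos) (le_of_lt (inv_pos.mpr hp2pos))]
  have hw2eq : 1 - p * p1⁻¹ = p * p2⁻¹ := by linarith
  set T : Finset ℕ := Finset.Icc 1 N with hT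
  have hcard : (T.card : ℝ≥0∞) = (N:ℝ≥0∞) := by
    rw [hT, Nat.card_Icc]; norm_num
  -- pointwise power mean
  have pm : ∀ x : ℤ, (∑ n ∈ T, a (x - (Nat.sqrt n : ℤ)) * b (x - (n:ℤ))) ^ p ≤
      (N:ℝ≥0∞) ^ (p - 1) * ∑ n ∈ T, (a (x - (Nat.sqrt n : ℤ)) * b (x - (n:ℤ))) ^ p := by
    intro x
    have H := ENNReal.inner_le_weight_mul_Lp_of_nonneg T hpge (fun _ => 1)
      (fun n => a (x - (Nat.sqrt n : ℤ)) * b (x - (n:ℤ)))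
    simp only [one_mul] at H
    have H2 := ENNReal.rpow_le_rpow H (le_of_lt hppos)
    calc (∑ n ∈ T, a (x - (Nat.sqrt n : ℤ)) * b (x - (n:ℤ))) ^ p ≤ _ := H2
      _ = (N:ℝ≥0∞) ^ (p - 1) * ∑ n ∈ T, (a (x - (Nat.sqrt n : ℤ)) * b (x - (n:ℤ))) ^ p := by
          rw [ENNReal.mul_rpow_of_nonneg _ _ (le_of_lt hppos), ← ENNReal.rpow_mul,
            ← ENNReal.rpow_mul]
          have e1 : (1 - p⁻¹) * p = p - 1 := by field_simp
          have e2 : p⁻¹ * p = 1 := inv_mul_cancel₀ hpne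
          rw [e1, e2, ENNReal.rpow_one]
          congr 2
          rw [Finset.sum_const, nsmul_eq_mul, mul_one, hcard]
  -- per-n Hölder
  have pern : ∀ n : ℕ, ∑' x : ℤ, (a (x - (Nat.sqrt n : ℤ)) * b (x - (n:ℤ))) ^ p ≤
      (∑' u, a u ^ p1) ^ (p * p1⁻¹) * (∑' u, b u ^ p2) ^ (p * p2⁻¹) := by
    intro n
    have key : ∀ x : ℤ, (a (x - (Nat.sqrt n : ℤ)) * b (x - (n:ℤ))) ^ p =
        (a (x - (Nat.sqrt n : ℤ)) ^ p1) ^ (p * p1⁻¹) * (b (x - (n:ℤ)) ^ p2) ^ (1 - p * p1⁻¹) := by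
      intro x
      rw [hw2eq, ENNReal.mul_rpow_of_nonneg _ _ (le_of_lt hppos), ← ENNReal.rpow_mul,
        ← ENNReal.rpow_mul]
      congr 2
      · field_simp
      · field_simp
    calc ∑' x : ℤ, (a (x - (Nat.sqrt n : ℤ)) * b (x - (n:ℤ))) ^ p
        = ∑' x : ℤ, (a (x - (Nat.sqrt n : ℤ)) ^ p1) ^ (p * p1⁻¹) *
            (b (x - (n:ℤ)) ^ p2) ^ (1 - p * p1⁻¹) := tsum_congr key
      _ ≤ (∑' x : ℤ, a (x - (Nat.sqrt n : ℤ)) ^ p1) ^ (p * p1⁻¹) *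
            (∑' x : ℤ, b (x - (n:ℤ)) ^ p2) ^ (1 - p * p1⁻¹) :=
          tsum_hoelder2 (p * p1⁻¹) hwa hwb _ _
      _ = (∑' u, a u ^ p1) ^ (p * p1⁻¹) * (∑' u, b u ^ p2) ^ (p * p2⁻¹) := by
          rw [hw2eq]
          congr 1
          · congr 1
            exact (Equiv.subRight ((Nat.sqrt n : ℤ))).tsum_eq (fun u => a u ^ p1)
          · congr 1
            exact (Equiv.subRight ((n:ℤ))).tsum_eq (fun u => b u ^ p2)
  -- combine
  calc ∑' x : ℤ, (∑ n ∈ T, a (x - (Nat.sqrt n : ℤ)) * b (x - (n:ℤ))) ^ p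
      ≤ ∑' x : ℤ, (N:ℝ≥0∞) ^ (p - 1) * ∑ n ∈ T, (a (x - (Nat.sqrt n : ℤ)) * b (x - (n:ℤ))) ^ p :=
        ENNReal.tsum_le_tsum pm
    _ = (N:ℝ≥0∞) ^ (p - 1) * ∑' x : ℤ, ∑ n ∈ T, (a (x - (Nat.sqrt n : ℤ)) * b (x - (n:ℤ))) ^ p :=
        ENNReal.tsum_mul_left
    _ = (N:ℝ≥0∞) ^ (p - 1) * ∑ n ∈ T, ∑' x : ℤ, (a (x - (Nat.sqrt n : ℤ)) * b (x - (n:ℤ))) ^ p := by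
        rw [Summable.tsum_finsetSum (fun n _ => ENNReal.summable)]
    _ ≤ (N:ℝ≥0∞) ^ (p - 1) * ∑ n ∈ T,
          ((∑' u, a u ^ p1) ^ (p * p1⁻¹) * (∑' u, b u ^ p2) ^ (p * p2⁻¹)) := by
        apply mul_le_mul_right
        exact Finset.sum_le_sum (fun n _ => pern n)
    _ = (N:ℝ≥0∞) ^ (p - 1) * ((N:ℝ≥0∞) *
          ((∑' u, a u ^ p1) ^ (p * p1⁻¹) * (∑' u, b u ^ p2) ^ (p * p2⁻¹))) := by
        rw [Finset.sum_const, nsmul_eq_mul, hcard]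
    _ ≤ 4 * (N:ℝ≥0∞) ^ p * (∑' u, a u ^ p1) ^ (p * p1⁻¹) * (∑' u, b u ^ p2) ^ (p * p2⁻¹) := by
        have hNp : (N:ℝ≥0∞) ^ (p - 1) * (N:ℝ≥0∞) = (N:ℝ≥0∞) ^ p := by
          rw [← ENNReal.rpow_one (N:ℝ≥0∞)]
          calc ((N:ℝ≥0∞) ^ (1:ℝ)) ^ (p-1) * (N:ℝ≥0∞) ^ (1:ℝ)
              = (N:ℝ≥0∞) ^ (p-1) * (N:ℝ≥0∞) ^ (1:ℝ) := by rw [ENNReal.rpow_one]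
            _ = (N:ℝ≥0∞) ^ ((p-1) + 1) := by
                rw [ENNReal.rpow_add_of_nonneg _ _ (by linarith) (by norm_num)]
            _ = ((N:ℝ≥0∞) ^ (1:ℝ)) ^ p := by rw [ENNReal.rpow_one]; norm_num
        calc (N:ℝ≥0∞) ^ (p - 1) * ((N:ℝ≥0∞) *
              ((∑' u, a u ^ p1) ^ (p * p1⁻¹) * (∑' u, b u ^ p2) ^ (p * p2⁻¹)))
            = ((N:ℝ≥0∞) ^ (p-1) * (N:ℝ≥0∞)) *
              (∑' u, a u ^ p1) ^ (p * p1⁻¹) * (∑' u, b u ^ p2) ^ (p * p2⁻¹) := by ring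
          _ = (N:ℝ≥0∞) ^ p *
              (∑' u, a u ^ p1) ^ (p * p1⁻¹) * (∑' u, b u ^ p2) ^ (p * p2⁻¹) := by rw [hNp]
          _ ≤ _ := by
              gcongr
              calc (N:ℝ≥0∞) ^ p = 1 * (N:ℝ≥0∞) ^ p := (one_mul _).symm
                _ ≤ 4 * (N:ℝ≥0∞) ^ p := mul_le_mul_left (by norm_num) _

end Stmt11

namespace Stmt11

lemma core (p1 p2 p : ℝ) (h1 : 1 < p1) (h2 : 1 < p2) (hp : p⁻¹ = p1⁻¹ + p2⁻¹)
    (hppos : 0 < p) (N : ℕ) (hN : 1 ≤ N) (a b : ℤ → ℝ≥0∞) :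
    ∑' x : ℤ, (∑ n ∈ Finset.Icc 1 N, a (x - (Nat.sqrt n : ℤ)) * b (x - (n:ℤ))) ^ p ≤
      4 * (N:ℝ≥0∞) ^ p * (∑' u, a u ^ p1) ^ (p * p1⁻¹) * (∑' u, b u ^ p2) ^ (p * p2⁻¹) := by
  rcases le_total p 1 with h | h
  · exact core_le_one p1 p2 p h1 h2 hp hppos h N hN a b
  · exact core_ge_one p1 p2 p h1 h2 hp hppos h N hN a b

end Stmt11

theorem stmt11 (p1 p2 p : ℝ) (h1 : 1 < p1) (h2 : 1 < p2)
    (hp : p⁻¹ = p1⁻¹ + p2⁻¹) :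
    ∃ C : ℝ≥0∞, 0 < C ∧ C < ⊤ ∧ ∀ N : ℕ, 1 ≤ N → ∀ f g : ℤ → ℂ,
      Memℓp f (ENNReal.ofReal p1) → Memℓp g (ENNReal.ofReal p2) →
      eLpNorm (fun x : ℤ => (N : ℂ)⁻¹ *
          ∑ n ∈ Finset.Icc 1 N, f (x - (Nat.sqrt n : ℤ)) * g (x - (n : ℤ)))
          (ENNReal.ofReal p) Measure.count ≤
        C * eLpNorm f (ENNReal.ofReal p1) Measure.count *
          eLpNorm g (ENNReal.ofReal p2) Measure.count := by
  have hp1pos : 0 < p1 := lt_trans zero_lt_one h1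
  have hp2pos : 0 < p2 := lt_trans zero_lt_one h2
  have hppos : 0 < p := by
    have hinv : 0 < p⁻¹ := by rw [hp]; positivity
    exact inv_pos.mp hinv
  have hpne : p ≠ 0 := ne_of_gt hppos
  refine ⟨16, by norm_num, by norm_num, ?_⟩
  intro N hN f g _ _
  set a : ℤ → ℝ≥0∞ := fun u => (‖f u‖₊ : ℝ≥0∞) with ha
  set b : ℤ → ℝ≥0∞ := fun u => (‖g u‖₊ : ℝ≥0∞) with hb
  -- rewrite the eLpNorms
  have unfold_norm : ∀ (q : ℝ), 0 < q → ∀ h : ℤ → ℂ,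
      eLpNorm h (ENNReal.ofReal q) Measure.count
        = (∑' x : ℤ, ((‖h x‖₊ : ℝ≥0∞)) ^ q) ^ (1 / q) := by
    intro q hq h
    rw [eLpNorm_eq_lintegral_rpow_enorm_toReal (by simp [ENNReal.ofReal_eq_zero]; linarith)
      ENNReal.ofReal_ne_top, ENNReal.toReal_ofReal (le_of_lt hq), lintegral_count]
    rfl
  rw [unfold_norm p hppos, unfold_norm p1 hp1pos, unfold_norm p2 hp2pos]
  set U : ℝ≥0∞ := ∑' u, a u ^ p1 with hU
  set V : ℝ≥0∞ := ∑' u, b u ^ p2 with hV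
  have hNRne : (N:ℝ≥0) ≠ 0 := Nat.cast_ne_zero.mpr (by omega)
  have hNinv : (‖((N:ℂ))⁻¹‖₊ : ℝ≥0∞) = ((N:ℝ≥0∞))⁻¹ := by
    rw [nnnorm_inv, RCLike.nnnorm_natCast (K := ℂ), ENNReal.coe_inv hNRne]
    norm_num
  have pointwise : ∀ x : ℤ, ((‖(N : ℂ)⁻¹ *
      ∑ n ∈ Finset.Icc 1 N, f (x - (Nat.sqrt n : ℤ)) * g (x - (n : ℤ))‖₊ : ℝ≥0∞)) ≤
      ((N:ℝ≥0∞))⁻¹ * ∑ n ∈ Finset.Icc 1 N, a (x - (Nat.sqrt n : ℤ)) * b (x - (n:ℤ)) := by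
    intro x
    rw [nnnorm_mul, ENNReal.coe_mul, hNinv]
    apply mul_le_mul_right
    calc ((‖∑ n ∈ Finset.Icc 1 N, f (x - (Nat.sqrt n : ℤ)) * g (x - (n : ℤ))‖₊ : ℝ≥0∞))
        ≤ (((∑ n ∈ Finset.Icc 1 N, ‖f (x - (Nat.sqrt n : ℤ)) * g (x - (n : ℤ))‖₊ : ℝ≥0)) : ℝ≥0∞) := by
          exact_mod_cast nnnorm_sum_le _ _
      _ = ∑ n ∈ Finset.Icc 1 N, a (x - (Nat.sqrt n : ℤ)) * b (x - (n:ℤ)) := by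
          rw [ENNReal.coe_finset_sum]
          apply Finset.sum_congr rfl
          intro n _
          rw [nnnorm_mul, ENNReal.coe_mul]
  have hNne : (N:ℝ≥0∞) ≠ 0 := Nat.cast_ne_zero.mpr (by omega)
  have hNnetop : (N:ℝ≥0∞) ≠ ⊤ := ENNReal.natCast_ne_top N
  calc (∑' x : ℤ, ((‖(N : ℂ)⁻¹ *
        ∑ n ∈ Finset.Icc 1 N, f (x - (Nat.sqrt n : ℤ)) * g (x - (n : ℤ))‖₊ : ℝ≥0∞)) ^ p) ^ (1/p)
      ≤ (∑' x : ℤ, (((N:ℝ≥0∞))⁻¹ *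
          ∑ n ∈ Finset.Icc 1 N, a (x - (Nat.sqrt n : ℤ)) * b (x - (n:ℤ))) ^ p) ^ (1/p) := by
        apply ENNReal.rpow_le_rpow _ (by positivity)
        apply ENNReal.tsum_le_tsum
        intro x
        exact ENNReal.rpow_le_rpow (pointwise x) (le_of_lt hppos)
    _ = ((N:ℝ≥0∞))⁻¹ * (∑' x : ℤ,
          (∑ n ∈ Finset.Icc 1 N, a (x - (Nat.sqrt n : ℤ)) * b (x - (n:ℤ))) ^ p) ^ (1/p) := by
        have e1 : ∀ x : ℤ, (((N:ℝ≥0∞))⁻¹ *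
            ∑ n ∈ Finset.Icc 1 N, a (x - (Nat.sqrt n : ℤ)) * b (x - (n:ℤ))) ^ p
            = (((N:ℝ≥0∞))⁻¹) ^ p *
              (∑ n ∈ Finset.Icc 1 N, a (x - (Nat.sqrt n : ℤ)) * b (x - (n:ℤ))) ^ p :=
          fun x => ENNReal.mul_rpow_of_nonneg _ _ (le_of_lt hppos)
        rw [tsum_congr e1, ENNReal.tsum_mul_left,
          ENNReal.mul_rpow_of_nonneg _ _ (by positivity : (0:ℝ) ≤ 1/p), ← ENNReal.rpow_mul,
          mul_one_div_cancel hpne, ENNReal.rpow_one]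
    _ ≤ ((N:ℝ≥0∞))⁻¹ * (4 * (N:ℝ≥0∞) ^ p * U ^ (p * p1⁻¹) * V ^ (p * p2⁻¹)) ^ (1/p) := by
        apply mul_le_mul_right
        apply ENNReal.rpow_le_rpow _ (by positivity)
        exact Stmt11.core p1 p2 p h1 h2 hp hppos N hN a b
    _ = ((N:ℝ≥0∞))⁻¹ * ((4:ℝ≥0∞) ^ (1/p) * (N:ℝ≥0∞) * U ^ p1⁻¹ * V ^ p2⁻¹) := by
        congr 1
        rw [ENNReal.mul_rpow_of_nonneg _ _ (by positivity : (0:ℝ) ≤ 1/p),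
          ENNReal.mul_rpow_of_nonneg _ _ (by positivity : (0:ℝ) ≤ 1/p),
          ENNReal.mul_rpow_of_nonneg _ _ (by positivity : (0:ℝ) ≤ 1/p),
          ← ENNReal.rpow_mul, ← ENNReal.rpow_mul, ← ENNReal.rpow_mul,
          mul_one_div_cancel hpne, ENNReal.rpow_one,
          show p * p1⁻¹ * (1/p) = p1⁻¹ by field_simp,
          show p * p2⁻¹ * (1/p) = p2⁻¹ by field_simp]
    _ ≤ ((N:ℝ≥0∞))⁻¹ * ((16:ℝ≥0∞) * (N:ℝ≥0∞) * U ^ p1⁻¹ * V ^ p2⁻¹) := by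
        apply mul_le_mul_right
        apply mul_le_mul_left
        apply mul_le_mul_left
        apply mul_le_mul_left
        have hexp : 1/p ≤ 2 := by
          have e1 : p1⁻¹ < 1 := by rw [inv_lt_one_iff₀]; right; exact h1
          have e2 : p2⁻¹ < 1 := by rw [inv_lt_one_iff₀]; right; exact h2
          have : p⁻¹ < 2 := by rw [hp]; linarith
          rw [one_div]; linarith
        calc (4:ℝ≥0∞) ^ (1/p) ≤ (4:ℝ≥0∞) ^ (2:ℝ) :=
              ENNReal.rpow_le_rpow_of_exponent_le (by norm_num) hexp
          _ = 16 := by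
              rw [show ((2:ℝ)) = ((2:ℕ):ℝ) by norm_num, ENNReal.rpow_natCast]
              norm_num
    _ = 16 * U ^ (1/p1) * V ^ (1/p2) := by
        rw [one_div, one_div]
        calc ((N:ℝ≥0∞))⁻¹ * ((16:ℝ≥0∞) * (N:ℝ≥0∞) * U ^ p1⁻¹ * V ^ p2⁻¹)
            = (((N:ℝ≥0∞))⁻¹ * (N:ℝ≥0∞)) * 16 * U ^ p1⁻¹ * V ^ p2⁻¹ := by ring
          _ = 16 * U ^ p1⁻¹ * V ^ p2⁻¹ := by
              rw [ENNReal.inv_mul_cancel hNne hNnetop, one_mul]
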